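/- arXiv:2211.13986 — 4 statements merged into one kernel-verified Lean document; each statement's English description precedes it below -/
import Mathlib

section
/- Let (E,L) be a complex of oriented matroids, let X ∈ L, and set F(X) = {X∘Y : Y ∈ L}. Then the pair (z(X), {Z restricted to z(X) : Z ∈ F(X)}) is an oriented matroid: the restricted set of sign vectors contains the all-zeros vector and satisfies (FS) and (SE). -/
open scoped Classical
open MvPolynomial

noncomputable section

abbrev SV (E : Type*) := E → SignType

variable {E : Type*}

/-- Composition of sign vectors. -/
def scomp (X Y : SV E) : SV E := fun e => if X e = 0 then Y e else X e

/-- Separator of two sign vectors. -/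
def sep (X Y : SV E) : Set E := {e | X e = -(Y e) ∧ X e ≠ 0}

/-- Zero set of a sign vector. -/
def zset (X : SV E) : Set E := {e | X e = 0}

/-- Face symmetry axiom. -/
def FSax (L : Set (SV E)) : Prop := ∀ X ∈ L, ∀ Y ∈ L, scomp X (-Y) ∈ L

/-- Strong elimination axiom. -/
def SEax (L : Set (SV E)) : Prop :=
  ∀ X ∈ L, ∀ Y ∈ L, ∀ e ∈ sep X Y,
    ∃ Z ∈ L, Z e = 0 ∧ ∀ f ∉ sep X Y, Z f = scomp X Y f

/-- Complex of oriented matroids. -/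
def IsCOM (L : Set (SV E)) : Prop := FSax L ∧ SEax L

/-- Simplicity. -/
def SimpleCOM (L : Set (SV E)) : Prop :=
  (∀ e : E, ∀ s : SignType, ∃ X ∈ L, X e = s) ∧
  (∀ e f : E, e ≠ f → ∀ s : SignType, ∃ X ∈ L, X e * X f = s)

/-- Topes: covectors of full support. -/
def Topes (L : Set (SV E)) : Set (SV E) := {X | X ∈ L ∧ ∀ e, X e ≠ 0}

/-- Componentwise order on sign vectors (0 < +, 0 < -). -/
def covLE (X Y : SV E) : Prop := ∀ e, X e = 0 ∨ X e = Y e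

def covLT (X Y : SV E) : Prop := covLE X Y ∧ X ≠ Y

def starSet (L : Set (SV E)) (X : SV E) : Set (SV E) := {T | T ∈ Topes L ∧ covLE X T}

/-- Entry of the signed Varchenko matrix. -/
def varEntry (K : Type*) [Field K] [Fintype E] (P Q : SV E) : MvPolynomial (E × Bool) K :=
  ∏ e ∈ Set.toFinset (sep P Q), X (if P e = 1 then (e, true) else (e, false))

/-- The signed Varchenko matrix, indexed by topes. -/
def varMatrix (K : Type*) [Field K] [Fintype E] (L : Set (SV E)) :
    Matrix ↥(Topes L) ↥(Topes L) (MvPolynomial (E × Bool) K) :=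
  Matrix.of fun P Q => varEntry K P.1 Q.1

/-- a(Y) = ∏_{e ∈ z(Y)} x_{e^+} x_{e^-}. -/
def aY (K : Type*) [Field K] [Fintype E] (Y : SV E) : MvPolynomial (E × Bool) K :=
  ∏ e ∈ Set.toFinset (zset Y), (X (e, true) * X (e, false))

/-- Restriction of a sign vector to a subset. -/
def restr (A : Set E) (X : SV E) : SV ↥A := fun a => X a.1

/-- `m` is the Möbius function of the relation `r` on the (finite) carrier `S`. -/
def IsMobiusOn {α : Type*} [Fintype α] (S : Set α) (r : α → α → Prop) (m : α → α → ℤ) : Prop :=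
  (∀ x ∈ S, m x x = 1) ∧
  ∀ x ∈ S, ∀ y ∈ S, r x y → x ≠ y →
    m x y = -∑ z ∈ Set.toFinset {z | z ∈ S ∧ r x z ∧ r z y ∧ z ≠ y}, m x z

/-- The carrier of the poset `T_{R,e}`: topes with `e`-coordinate `-R e`, plus
an artificial least element `none`. -/
def TReSet (L : Set (SV E)) (R : SV E) (e : E) : Set (Option (SV E)) :=
  insert none (some '' {P | P ∈ Topes L ∧ P e = -(R e)})

/-- The order of the poset `T_{R,e}` (order induced from the tope poset `T_R`,
with `none` as least element). -/
def TReRel (R : SV E) : Option (SV E) → Option (SV E) → Prop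
  | none, _ => True
  | some _, none => False
  | some P, some Q => sep R P ⊆ sep R Q

/-- `T^{Y,e}`: topes `P` such that `Y` is the maximal covector with `Y ≤ P` and `Y e = 0`. -/
def TYe (L : Set (SV E)) (Y : SV E) (e : E) : Set (SV E) :=
  {P | P ∈ Topes L ∧ covLE Y P ∧ Y e = 0 ∧
    ∀ Y' ∈ L, covLE Y' P → Y' e = 0 → covLE Y' Y}

/-- `e` is the maximal element of `S(Q,R)` w.r.t. the linear order `ord`. -/
def maxOfSep (ord : LinearOrder E) (e : E) (Q R : SV E) : Prop :=
  e ∈ sep Q R ∧ ∀ f ∈ sep Q R, ord.le f e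

/-- The matrix `M^e`. -/
def Mmat (K : Type*) [Field K] [Fintype E] (L : Set (SV E)) (ord : LinearOrder E) (e : E)
    (m : SV E → Option (SV E) → Option (SV E) → ℤ) :
    Matrix ↥(Topes L) ↥(Topes L) (MvPolynomial (E × Bool) K) :=
  Matrix.of fun Q R =>
    if Q = R then 1
    else if maxOfSep ord e Q.1 R.1 then
      (-(m R.1 none (some Q.1)) : ℤ) • varEntry K Q.1 R.1
    else 0

/-- The covector set of the cyclic oriented matroid `C_n`. -/
def cyc (E : Type*) : Set (SV E) :=
  {X | X = 0 ∨ ((∃ e, X e = 1) ∧ (∃ f, X f = -1))}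

/-- The topal fiber `ρ_{(S⁺,S⁻)}(L')`. -/
def fiber {E' : Type*} (L' : Set (SV E')) (Sp Sm : Set E') : Set (SV ↥((Sp ∪ Sm)ᶜ)) :=
  restr ((Sp ∪ Sm)ᶜ) '' {Z | Z ∈ L' ∧ (∀ e ∈ Sp, Z e = 1) ∧ (∀ e ∈ Sm, Z e = -1)}


/-- for a covector `X` of a COM, the restriction of
`F(X) = {X ∘ Y : Y ∈ L}` to the zero set of `X` is an oriented matroid. -/
theorem face_restriction_is_OM {E : Type*} [Fintype E] (L : Set (SV E)) (hCOM : IsCOM L)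
    (X : SV E) (hX : X ∈ L) :
    (0 : SV ↥(zset X)) ∈ restr (zset X) '' {W | ∃ Y ∈ L, W = scomp X Y} ∧
    FSax (restr (zset X) '' {W | ∃ Y ∈ L, W = scomp X Y}) ∧
    SEax (restr (zset X) '' {W | ∃ Y ∈ L, W = scomp X Y}) := by
  have hmemL : ∀ Y ∈ L, scomp X Y ∈ L := by
    intro Y hY
    have h2 : scomp X (-(scomp X (-Y))) ∈ L := hCOM.1 X hX _ (hCOM.1 X hX Y hY)
    convert h2 using 1
    funext e
    by_cases h : X e = 0 <;> simp [scomp, h]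
  refine ⟨⟨X, ⟨X, hX, by funext e; simp [scomp]⟩, ?_⟩, ?_, ?_⟩
  · funext a
    have := a.2
    simp only [zset, Set.mem_setOf_eq] at this
    simp [restr, this]
  · -- FS
    rintro V1 ⟨W1, ⟨Y1, hY1, rfl⟩, rfl⟩ V2 ⟨W2, ⟨Y2, hY2, rfl⟩, rfl⟩
    refine ⟨scomp X (scomp (scomp X Y1) (-(scomp X Y2))), ⟨_,
      hCOM.1 _ (hmemL Y1 hY1) _ (hmemL Y2 hY2), rfl⟩, ?_⟩
    funext a
    have ha : X a.1 = 0 := a.2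
    simp [restr, scomp, ha]
  · -- SE
    rintro V1 ⟨W1, ⟨Y1, hY1, rfl⟩, rfl⟩ V2 ⟨W2, ⟨Y2, hY2, rfl⟩, rfl⟩ e he
    set U1 := scomp X Y1 with hU1
    set U2 := scomp X Y2 with hU2
    have heX : X e.1 = 0 := e.2
    have he' : e.1 ∈ sep U1 U2 := by
      obtain ⟨h1, h2⟩ := he
      exact ⟨h1, h2⟩
    obtain ⟨Z, hZL, hZe, hZf⟩ := hCOM.2 U1 (hmemL Y1 hY1) U2 (hmemL Y2 hY2) e.1 he'
    refine ⟨restr (zset X) (scomp X Z), ⟨scomp X Z, ⟨Z, hZL, rfl⟩, rfl⟩, ?_, ?_⟩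
    · simp [restr, scomp, heX, hZe]
    · intro f hf
      have hfX : X f.1 = 0 := f.2
      have hf' : f.1 ∉ sep U1 U2 := by
        intro hc
        exact hf ⟨hc.1, hc.2⟩
      have := hZf f.1 hf'
      simp only [restr, scomp, hfX, if_true] at *
      exact this
end
end

section
/- Let (E,L) be a complex of oriented matroids with tope set T, let X ∈ L and P ∈ T. Then Q = X∘P is the unique tope in star(X) = {T ∈ T : X ≤ T} such that for all O ∈ star(X): S(P,O) = S(P,Q) ∪ S(Q,O) and S(P,Q) ∩ S(Q,O) = ∅. -/
open scoped Classical
open MvPolynomial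

noncomputable section

variable {E : Type*}

/-- `X ∘ P` is the unique gate of `star(X)` for the tope `P`. -/
theorem gate_of_star {E : Type*} [Fintype E] (L : Set (SV E)) (hCOM : IsCOM L)
    (X : SV E) (hX : X ∈ L) (P : SV E) (hP : P ∈ Topes L) :
    scomp X P ∈ starSet L X ∧
    (∀ O ∈ starSet L X,
      sep P O = sep P (scomp X P) ∪ sep (scomp X P) O ∧
      sep P (scomp X P) ∩ sep (scomp X P) O = ∅) ∧
    (∀ Q ∈ starSet L X,
      (∀ O ∈ starSet L X, sep P O = sep P Q ∪ sep Q O ∧ sep P Q ∩ sep Q O = ∅) →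
      Q = scomp X P) := by
  obtain ⟨hFS, _⟩ := hCOM
  obtain ⟨hPL, hPt⟩ := hP
  have st_eq : ∀ s t : SignType, s ≠ 0 → t ≠ 0 → s ≠ -t → s = t := by decide
  have st_self : ∀ s : SignType, s = -s → s = 0 := by decide
  set Q := scomp X P with hQdef
  have hQL : Q ∈ L := by
    have h1 : scomp X (-P) ∈ L := hFS X hX P hPL
    have h2 : scomp X (-(scomp X (-P))) ∈ L := hFS X hX _ h1
    have heq : scomp X (-(scomp X (-P))) = Q := by
      funext e
      show (if X e = 0 then (-(scomp X (-P))) e else X e) = scomp X P e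
      by_cases h : X e = 0 <;> simp [scomp, h]
    rwa [heq] at h2
  have hQe0 : ∀ e, X e = 0 → Q e = P e := fun e h => by simp [hQdef, scomp, h]
  have hQen : ∀ e, X e ≠ 0 → Q e = X e := fun e h => by simp [hQdef, scomp, h]
  have hQt : ∀ e, Q e ≠ 0 := by
    intro e
    by_cases h : X e = 0
    · rw [hQe0 e h]; exact hPt e
    · rw [hQen e h]; exact h
  have hQstar : Q ∈ starSet L X := by
    refine ⟨⟨hQL, hQt⟩, fun e => ?_⟩
    by_cases h : X e = 0
    · exact Or.inl h
    · exact Or.inr (hQen e h).symm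
  have key : ∀ O ∈ starSet L X,
      sep P O = sep P Q ∪ sep Q O ∧ sep P Q ∩ sep Q O = ∅ := by
    rintro O ⟨⟨hOL, hOt⟩, hXO⟩
    have hOe : ∀ e, X e ≠ 0 → O e = X e := fun e h => ((hXO e).resolve_left h).symm
    constructor
    · ext e
      by_cases h : X e = 0
      · have hq := hQe0 e h
        simp only [sep, Set.mem_setOf_eq, Set.mem_union, hq]
        constructor
        · intro he; exact Or.inr he
        · rintro (he | he)
          · exact absurd (st_self _ he.1) he.2
          · exact he
      · have hq : Q e = O e := by rw [hQen e h, hOe e h]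
        simp only [sep, Set.mem_setOf_eq, Set.mem_union, hq]
        constructor
        · intro he; exact Or.inl he
        · rintro (he | he)
          · exact he
          · exact absurd (st_self _ he.1) (hOt e)
    · rw [Set.eq_empty_iff_forall_notMem]
      rintro e ⟨⟨h1, h2⟩, h3, h4⟩
      by_cases h : X e = 0
      · rw [hQe0 e h] at h1; exact h2 (st_self _ h1)
      · rw [hQen e h] at h3
        rw [hOe e h] at h3
        exact h (st_self _ h3)
  refine ⟨hQstar, key, ?_⟩
  rintro Q' hQ'star hprop
  obtain ⟨⟨hQ'L, hQ't⟩, hXQ'⟩ := hQ'star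
  have h1 := hprop Q hQstar
  have h2 := key Q' ⟨⟨hQ'L, hQ't⟩, hXQ'⟩
  have hsub2 : sep P Q ⊆ sep P Q' := h2.1 ▸ Set.subset_union_left
  have hempty : sep Q' Q = ∅ := by
    rw [Set.eq_empty_iff_forall_notMem]
    intro e he
    have hePQ : e ∈ sep P Q := h1.1 ▸ Set.mem_union_right _ he
    have hePQ' : e ∈ sep P Q' := hsub2 hePQ
    have : e ∈ sep P Q' ∩ sep Q' Q := ⟨hePQ', he⟩
    rw [h1.2] at this
    exact this
  funext e
  have hne : e ∉ sep Q' Q := hempty ▸ Set.notMem_empty e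
  simp only [sep, Set.mem_setOf_eq, not_and] at hne
  by_contra hcon
  exact hcon (st_eq _ _ (hQ't e) (hQt e) (fun h => (hne h) (hQ't e)))

end
end

section
/- Let (E,L) be a simple complex of oriented matroids with tope set T, let R ∈ T, and let e ∈ E define a proper face of R, i.e. there is X ∈ L with X ≠ 0, X ≤ R and X_e = 0. Let Y ∈ L be the maximal covector with Y ≤ R and Y_e = 0, and let P_top be a tope with (P_top)_e = -R_e and P_top ∉ star(Y). Then μ((0̂,P_top)_{R,e}) = 0, i.e. the Möbius function of the poset T_{R,e} vanishes on the pair (0̂, P_top). -/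
open scoped Classical
open MvPolynomial

noncomputable section

variable {E : Type*}

lemma key_sum_aux {α : Type*} (g : α → ℤ) (T T' : Finset α) (a : α)
    (haT : a ∈ T) (haT' : a ∉ T') (hsub : T' ⊆ T)
    (hz : ∀ x ∈ T, x ≠ a → x ∉ T' → g x = 0)
    (hga : g a = -∑ x ∈ T', g x) :
    -∑ x ∈ T, g x = 0 := by
  classical
  have h1 : ∑ x ∈ T, g x = ∑ x ∈ insert a T', g x := by
    refine (Finset.sum_subset ?_ ?_).symm
    · intro x hx
      rcases Finset.mem_insert.mp hx with h | h
      · exact h ▸ haT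
      · exact hsub h
    · intro x hx hx2
      exact hz x hx (fun h => hx2 (Finset.mem_insert.mpr (Or.inl h)))
        (fun h => hx2 (Finset.mem_insert.mpr (Or.inr h)))
  rw [h1, Finset.sum_insert haT', hga]
  ring

lemma sign_neg_inj' : ∀ a b : SignType, -a = -b → a = b := by decide

lemma sign_eq_of_ne_neg' : ∀ a b : SignType, a ≠ 0 → b ≠ 0 → b ≠ -a → a = b := by decide

lemma sign_neg_neg' : ∀ a : SignType, - -a = a := by decide

lemma sign_ne_neg_self' : ∀ a : SignType, a ≠ 0 → ¬ a = -a := by decide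

set_option maxHeartbeats 1000000 in
/-- if `e` defines a proper face of the tope `R`, `Y` is the maximal
covector with `Y ≤ R`, `Y e = 0`, and `P_top` is a tope with `(P_top) e = -R e`
not in `star(Y)`, then the Möbius function of `T_{R,e}` vanishes on `(0̂, P_top)`. -/
theorem moebius_vanishes_outside_star {E : Type*} [Fintype E] [DecidableEq E]
    (L : Set (SV E)) (hCOM : IsCOM L) (hsimple : SimpleCOM L)
    (R : SV E) (hR : R ∈ Topes L) (e : E)
    (hface : ∃ X ∈ L, X ≠ 0 ∧ covLE X R ∧ X e = 0)
    (Y : SV E) (hYL : Y ∈ L) (hYR : covLE Y R) (hYe : Y e = 0)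
    (hYmax : ∀ X ∈ L, covLE X R → X e = 0 → covLE X Y)
    (Ptop : SV E) (hPt : Ptop ∈ Topes L) (hPte : Ptop e = -(R e))
    (hPtY : Ptop ∉ starSet L Y)
    (m : Option (SV E) → Option (SV E) → ℤ)
    (hm : IsMobiusOn (TReSet L R e) (TReRel R) m) :
    m none (some Ptop) = 0 := by
  have hRfull : ∀ f, R f ≠ 0 := hR.2
  have hYQnot : ¬ covLE Y Ptop := fun h => hPtY ⟨hPt, h⟩
  -- injectivity of topes from separators
  have hsep_inj : ∀ z w : SV E, (∀ f, z f ≠ 0) → (∀ f, w f ≠ 0) → sep R z = sep R w →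
      z = w := by
    intro z w hz hw hsep
    funext f
    by_cases hf : f ∈ sep R z
    · have hf' : f ∈ sep R w := hsep ▸ hf
      exact sign_neg_inj' _ _ (hf.1.symm.trans hf'.1)
    · have hf' : f ∉ sep R w := fun h => hf (hsep ▸ h)
      have h1 : R f ≠ -(z f) := fun h => hf ⟨h, hRfull f⟩
      have h2 : R f ≠ -(w f) := fun h => hf' ⟨h, hRfull f⟩
      rw [sign_eq_of_ne_neg' (z f) (R f) (hz f) (hRfull f) h1,
          sign_eq_of_ne_neg' (w f) (R f) (hw f) (hRfull f) h2]
  have hSnone : (none : Option (SV E)) ∈ TReSet L R e := Set.mem_insert _ _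
  have hSsome : ∀ z : SV E, z ∈ Topes L → z e = -(R e) → some z ∈ TReSet L R e :=
    fun z h1 h2 => Set.mem_insert_iff.mpr (Or.inr ⟨z, ⟨h1, h2⟩, rfl⟩)
  suffices H : ∀ n : ℕ, ∀ Q, Q ∈ Topes L → Q e = -(R e) → ¬ covLE Y Q →
      (Set.toFinset (sep R Q)).card ≤ n → m none (some Q) = 0 by
    exact H _ Ptop hPt hPte hYQnot le_rfl
  intro n
  induction n with
  | zero =>
    intro Q hQ hQe hYQ hcard
    exfalso
    have he : e ∈ sep R Q := ⟨by rw [hQe, sign_neg_neg'], hRfull e⟩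
    have hmem : e ∈ Set.toFinset (sep R Q) := Set.mem_toFinset.mpr he
    have := Finset.card_pos.mpr ⟨e, hmem⟩
    omega
  | succ n ih =>
    intro Q hQ hQe hYQ hcard
    set Q' := scomp Y Q with hQ'def
    have hQ'L : Q' ∈ L := by
      have h1 := hCOM.1 Y hYL Q hQ.1
      have h2 := hCOM.1 Y hYL _ h1
      convert h2 using 1
      funext f
      simp only [hQ'def, scomp, Pi.neg_apply]
      by_cases hf : Y f = 0 <;> simp [hf, sign_neg_neg']
    have hQ'full : ∀ f, Q' f ≠ 0 := by
      intro f
      simp only [hQ'def, scomp]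
      by_cases hf : Y f = 0
      · simpa [hf] using hQ.2 f
      · simp [hf]
    have hQ'e : Q' e = -(R e) := by
      simp only [hQ'def, scomp, hYe, if_pos rfl]
      exact hQe
    have hYQ' : covLE Y Q' := by
      intro f
      by_cases hf : Y f = 0
      · exact Or.inl hf
      · exact Or.inr (by simp [hQ'def, scomp, hf])
    have hQ'tope : Q' ∈ Topes L := ⟨hQ'L, hQ'full⟩
    have hQ'ne : Q' ≠ Q := fun h => hYQ (h ▸ hYQ')
    have hsepQ' : sep R Q' ⊆ sep R Q := by
      rintro f ⟨h1, h2⟩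
      by_cases hf : Y f = 0
      · exact ⟨by simpa [hQ'def, scomp, hf] using h1, h2⟩
      · exfalso
        have hYR' : Y f = R f := (hYR f).resolve_left hf
        have hval : Q' f = Y f := by simp [hQ'def, scomp, hf]
        rw [hval, hYR'] at h1
        exact sign_ne_neg_self' (R f) h2 h1
    have hstar_le : ∀ z : SV E, covLE Y z → sep R z ⊆ sep R Q → sep R z ⊆ sep R Q' := by
      rintro z hYz hzQ f ⟨h1, h2⟩
      by_cases hfY : Y f = 0
      · refine ⟨?_, h2⟩
        have hval : Q' f = Q f := by simp [hQ'def, scomp, hfY]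
        rw [hval]
        exact (hzQ ⟨h1, h2⟩).1
      · exfalso
        have h3 : Y f = R f := (hYR f).resolve_left hfY
        have h4 : Y f = z f := (hYz f).resolve_left hfY
        rw [← h4, h3] at h1
        exact sign_ne_neg_self' (R f) h2 h1
    have hcard_lt : ∀ z : SV E, (∀ f, z f ≠ 0) → sep R z ⊆ sep R Q → z ≠ Q →
        (Set.toFinset (sep R z)).card ≤ n := by
      intro z hz hsub hne
      have h1 : Set.toFinset (sep R z) ⊆ Set.toFinset (sep R Q) :=
        Set.toFinset_subset_toFinset.mpr hsub
      have h2 : Set.toFinset (sep R z) ≠ Set.toFinset (sep R Q) := by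
        intro h
        exact hne (hsep_inj z Q hz hQ.2 (Set.toFinset_inj.mp h))
      have hle := Finset.card_le_card h1
      by_contra hcon
      push_neg at hcon
      have hge : (Set.toFinset (sep R Q)).card ≤ (Set.toFinset (sep R z)).card := by omega
      exact h2 (Finset.eq_of_subset_of_card_le h1 hge)
    have hrecQ := hm.2 none hSnone (some Q) (hSsome Q hQ hQe) trivial
      (fun h => nomatch h)
    have hrecQ' := hm.2 none hSnone (some Q') (hSsome Q' hQ'tope hQ'e) trivial
      (fun h => nomatch h)
    rw [hrecQ]
    refine key_sum_aux (fun z => m none z) _ _ (some Q') ?_ ?_ ?_ ?_ hrecQ'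
    · simp only [Set.mem_toFinset, Set.mem_setOf_eq]
      exact ⟨hSsome Q' hQ'tope hQ'e, trivial, hsepQ',
        fun h => hQ'ne (Option.some_inj.mp h)⟩
    · intro h
      simp only [Set.mem_toFinset, Set.mem_setOf_eq] at h
      exact h.2.2.2 rfl
    · refine Finset.subset_iff.mpr ?_
      intro x hx
      simp only [Set.mem_toFinset, Set.mem_setOf_eq] at hx ⊢
      cases x with
      | none => exact ⟨hSnone, trivial, trivial, fun h => nomatch h⟩
      | some w =>
        obtain ⟨h1, -, h2, h3⟩ := hx
        have h2' : sep R w ⊆ sep R Q' := h2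
        refine ⟨h1, trivial, h2'.trans hsepQ', ?_⟩
        intro h
        have hwQ : w = Q := Option.some_inj.mp h
        subst hwQ
        exact hQ'ne (hsep_inj Q' w hQ'full hQ.2 (Set.Subset.antisymm hsepQ' h2'))
    · intro x hxT hxne hxT'
      cases x with
      | none =>
        exfalso
        apply hxT'
        simp only [Set.mem_toFinset, Set.mem_setOf_eq]
        exact ⟨hSnone, trivial, trivial, fun h => nomatch h⟩
      | some w =>
        simp only [Set.mem_toFinset, Set.mem_setOf_eq] at hxT
        obtain ⟨h1, -, h2, h3⟩ := hxT
        have h2' : sep R w ⊆ sep R Q := h2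
        have h3' : w ≠ Q := fun h => h3 (congrArg some h)
        have hw : w ∈ Topes L ∧ w e = -(R e) := by
          rcases Set.mem_insert_iff.mp h1 with h | h
          · exact absurd h (fun hh => nomatch hh)
          · obtain ⟨v, hv, hveq⟩ := h
            rw [Option.some_inj] at hveq
            exact hveq ▸ hv
        by_cases hYw : covLE Y w
        · exfalso
          by_cases hwQ' : w = Q'
          · exact hxne (congrArg some hwQ')
          · apply hxT'
            simp only [Set.mem_toFinset, Set.mem_setOf_eq]
            exact ⟨h1, trivial, hstar_le w hYw h2', fun h => hwQ' (Option.some_inj.mp h)⟩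
        · exact ih w hw.1 hw.2 hYw (hcard_lt w hw.1.2 h2' h3')

end
end

section
/- Let P be a finite poset and let I(P) be the set of order ideals (down-closed subsets) of P. Let V be the I(P)×I(P) matrix over K[x_p : p ∈ P] with V_{I,I'} = ∏_{p ∈ I Δ I'} x_p, where I Δ I' is the symmetric difference. Then det(V) = ∏_{p ∈ P} (1 - x_p^2)^{m_p}, where m_p is the number of antichains of P containing p. -/
open scoped Classical
open MvPolynomial

noncomputable section

namespace VarAux

universe u

abbrev Idl (P : Type u) [PartialOrder P] :=
  {I : Finset P // ∀ ⦃p q : P⦄, p ∈ I → q ≤ p → q ∈ I}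

set_option linter.unusedSectionVars false
set_option linter.unusedVariables false
set_option maxHeartbeats 1000000

variable {α β : Type*} [DecidableEq α] [DecidableEq β]

lemma symmDiff_insert_of_mem_right {I J : Finset α} {p : α} (hI : p ∉ I) (hJ : p ∈ J) :
    symmDiff I J = insert p (symmDiff I (J.erase p)) := by
  ext a
  by_cases hap : a = p
  · subst hap; simp [Finset.mem_symmDiff, hI, hJ]
  · simp [Finset.mem_symmDiff, Finset.mem_insert, Finset.mem_erase, hap]

lemma not_mem_symmDiff_erase_right {I J : Finset α} {p : α} (hI : p ∉ I) :
    p ∉ symmDiff I (J.erase p) := by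
  simp [Finset.mem_symmDiff, hI]

lemma symmDiff_erase_erase {I J : Finset α} {p : α} (hI : p ∈ I) (hJ : p ∈ J) :
    symmDiff (I.erase p) (J.erase p) = symmDiff I J := by
  ext a
  by_cases hap : a = p
  · subst hap; simp [Finset.mem_symmDiff, hI, hJ]
  · simp [Finset.mem_symmDiff, Finset.mem_erase, hap]

lemma symmDiff_union_left {s t t' : Finset α} (h : Disjoint s t) (h' : Disjoint s t') :
    symmDiff (t ∪ s) (t' ∪ s) = symmDiff t t' := by
  ext a
  by_cases has : a ∈ s
  · have h1 : a ∉ t := fun hm => (Finset.disjoint_left.1 h) has hm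
    have h2 : a ∉ t' := fun hm => (Finset.disjoint_left.1 h') has hm
    simp [Finset.mem_symmDiff, has, h1, h2]
  · simp [Finset.mem_symmDiff, Finset.mem_union, has]

lemma map_symmDiff (f : α ↪ β) (s t : Finset α) :
    symmDiff (s.map f) (t.map f) = (symmDiff s t).map f := by
  ext b
  simp only [Finset.mem_symmDiff, Finset.mem_map]
  constructor
  · rintro (⟨⟨a, ha, rfl⟩, hb⟩ | ⟨⟨a, ha, rfl⟩, hb⟩)
    · exact ⟨a, Or.inl ⟨ha, fun h => hb ⟨a, h, rfl⟩⟩, rfl⟩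
    · exact ⟨a, Or.inr ⟨ha, fun h => hb ⟨a, h, rfl⟩⟩, rfl⟩
  · rintro ⟨a, (⟨ha, ha'⟩ | ⟨ha, ha'⟩), rfl⟩
    · refine Or.inl ⟨⟨a, ha, rfl⟩, ?_⟩
      rintro ⟨a', ha'', he⟩
      exact ha' (f.injective he ▸ ha'')
    · refine Or.inr ⟨⟨a, ha, rfl⟩, ?_⟩
      rintro ⟨a', ha'', he⟩
      exact ha' (f.injective he ▸ ha'')


def Nmax (P : Type u) [Fintype P] [PartialOrder P] (p : P) : ℕ :=
  (Finset.univ.filter fun I : Idl P => p ∈ I.1 ∧ ∀ r ∈ I.1, ¬ p < r).card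

variable {P : Type u} [Fintype P] [PartialOrder P]

/-- every member of a finset lies below a maximal member -/
lemma exists_le_maximal {I : Finset P} {r : P} (hr : r ∈ I) :
    ∃ m ∈ I, r ≤ m ∧ ∀ s ∈ I, ¬ m < s := by
  obtain ⟨m, hm, hmax⟩ := (I.filter fun s => r ≤ s).exists_maximal
    ⟨r, Finset.mem_filter.2 ⟨hr, le_refl r⟩⟩
  rw [Finset.mem_filter] at hm
  refine ⟨m, hm.1, hm.2, fun s hs hlt => ?_⟩
  exact not_lt_of_ge (hmax (Finset.mem_filter.2 ⟨hs, le_trans hm.2 hlt.le⟩) hlt.le) hlt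

/-- the down-set of a finset, as an order ideal -/
def down (A : Finset P) : Idl P :=
  ⟨Finset.univ.filter fun r => ∃ a ∈ A, r ≤ a, by
    intro x y hx hyx
    rw [Finset.mem_filter] at hx ⊢
    obtain ⟨-, a, ha, hxa⟩ := hx
    exact ⟨Finset.mem_univ y, a, ha, hyx.trans hxa⟩⟩

lemma mem_down {A : Finset P} {r : P} : r ∈ (down A).1 ↔ ∃ a ∈ A, r ≤ a := by
  simp [down]

lemma mem_down_self {A : Finset P} {a : P} (ha : a ∈ A) : a ∈ (down A).1 :=
  mem_down.2 ⟨a, ha, le_refl a⟩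

lemma down_eq_of_antichain {A : Finset P} (hA : IsAntichain (· ≤ ·) (A : Set P))
    {a : P} (ha : a ∈ (down A).1) (hmax : ∀ r ∈ (down A).1, ¬ a < r) : a ∈ A := by
  obtain ⟨b, hb, hab⟩ := mem_down.1 ha
  rcases eq_or_lt_of_le hab with rfl | hlt
  · exact hb
  · exact absurd hlt (hmax b (mem_down_self hb))

lemma antichain_card_eq_Nmax (p : P) :
    (Finset.univ.filter fun A : Finset P =>
      IsAntichain (· ≤ ·) (A : Set P) ∧ p ∈ A).card = Nmax P p := by
  rw [Nmax]
  refine Finset.card_bij (fun A _ => down A) ?_ ?_ ?_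
  · intro A hA
    rw [Finset.mem_filter] at hA ⊢
    obtain ⟨-, hAc, hpA⟩ := hA
    refine ⟨Finset.mem_univ _, mem_down_self hpA, fun r hr hpr => ?_⟩
    obtain ⟨b, hb, hrb⟩ := mem_down.1 hr
    have hpb : p < b := hpr.trans_le hrb
    exact hAc hpA hb (ne_of_lt hpb) hpb.le
  · intro A hA A' hA' h
    rw [Finset.mem_filter] at hA hA'
    ext a
    constructor
    · intro ha
      have h1 : a ∈ (down A').1 := h ▸ mem_down_self ha
      refine down_eq_of_antichain hA'.2.1 h1 fun r hr har => ?_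
      have hr' : r ∈ (down A).1 := h ▸ hr
      obtain ⟨b, hb, hrb⟩ := mem_down.1 hr'
      exact hA.2.1 ha hb (ne_of_lt (har.trans_le hrb)) (har.trans_le hrb).le
    · intro ha
      have h1 : a ∈ (down A).1 := h ▸ mem_down_self ha
      refine down_eq_of_antichain hA.2.1 h1 fun r hr har => ?_
      have hr' : r ∈ (down A').1 := h ▸ hr
      obtain ⟨b, hb, hrb⟩ := mem_down.1 hr'
      exact hA'.2.1 ha hb (ne_of_lt (har.trans_le hrb)) (har.trans_le hrb).le
  · intro I hI
    rw [Finset.mem_filter] at hI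
    obtain ⟨-, hpI, hmax⟩ := hI
    refine ⟨I.1.filter fun a => ∀ r ∈ I.1, ¬ a < r, ?_, ?_⟩
    · rw [Finset.mem_filter]
      refine ⟨Finset.mem_univ _, ?_, Finset.mem_filter.2 ⟨hpI, hmax⟩⟩
      intro a ha b hb hne hab
      rw [Finset.mem_coe, Finset.mem_filter] at ha hb
      exact ha.2 b hb.1 (lt_of_le_of_ne hab hne)
    · apply Subtype.ext
      ext r
      rw [mem_down]
      constructor
      · rintro ⟨a, ha, hra⟩
        exact I.2 (Finset.mem_filter.1 ha).1 hra
      · intro hr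
        obtain ⟨m, hm, hrm, hmmax⟩ := exists_le_maximal hr
        exact ⟨m, Finset.mem_filter.2 ⟨hm, hmmax⟩, hrm⟩


section Step

variable {P : Type u} [Fintype P] [PartialOrder P] {p : P}

/-- removing a maximal element from an ideal containing it -/
def iot (hmax : ∀ x : P, ¬ p < x) (I : {I : Idl P // p ∈ I.1}) : {I : Idl P // p ∉ I.1} :=
  ⟨⟨I.1.1.erase p, by
    intro x y hx hyx
    rw [Finset.mem_erase] at hx ⊢
    refine ⟨?_, I.1.2 hx.2 hyx⟩
    rintro rfl
    exact hmax x (lt_of_le_of_ne hyx (Ne.symm hx.1))⟩, by simp⟩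

lemma iot_coe (hmax : ∀ x : P, ¬ p < x) (I : {I : Idl P // p ∈ I.1}) :
    ((iot hmax I).1 : Finset P) = I.1.1.erase p := rfl

/-- ideals of P minus a maximal element p correspond to ideals of P not containing p -/
def eLfun (hmax : ∀ x : P, ¬ p < x) (J : Idl {q : P // q ≠ p}) : {I : Idl P // p ∉ I.1} :=
  ⟨⟨J.1.map (Function.Embedding.subtype _), by
    intro x y hx hyx
    rw [Finset.mem_map] at hx ⊢
    obtain ⟨a, ha, rfl⟩ := hx
    have hyp : y ≠ p := by
      rintro rfl
      simp only [Function.Embedding.coe_subtype] at hyx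
      exact hmax a.1 (lt_of_le_of_ne hyx (fun h => a.2 h.symm))
    exact ⟨⟨y, hyp⟩, J.2 ha hyx, rfl⟩⟩, by
      rw [Finset.mem_map]
      rintro ⟨a, -, ha⟩
      exact a.2 ha⟩

lemma eL_bij (hmax : ∀ x : P, ¬ p < x) : Function.Bijective (eLfun (p := p) hmax) := by
  constructor
  · intro J J' h
    apply Subtype.ext
    have := congrArg (fun I => ((I.1 : Finset P))) h
    simpa using Finset.map_injective _ this
  · rintro ⟨I, hI⟩
    refine ⟨⟨I.1.subtype (fun q => q ≠ p), ?_⟩, ?_⟩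
    · intro a b ha hba
      rw [Finset.mem_subtype] at ha ⊢
      exact I.2 ha hba
    · apply Subtype.ext; apply Subtype.ext
      simp only [eLfun, Finset.subtype_map]
      rw [Finset.filter_ne', Finset.erase_eq_of_notMem hI]

def eL (hmax : ∀ x : P, ¬ p < x) : Idl {q : P // q ≠ p} ≃ {I : Idl P // p ∉ I.1} :=
  Equiv.ofBijective _ (eL_bij hmax)

lemma eL_coe (hmax : ∀ x : P, ¬ p < x) (J : Idl {q : P // q ≠ p}) :
    ((eL hmax J).1 : Finset P) = J.1.map (Function.Embedding.subtype _) := rfl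

/-- ideals of Q = {q // ¬ q ≤ p} correspond to ideals of P containing p (p maximal) -/
def eRfun (hmax : ∀ x : P, ¬ p < x) (J : Idl {q : P // ¬ q ≤ p}) : {I : Idl P // p ∈ I.1} :=
  ⟨⟨J.1.map (Function.Embedding.subtype _) ∪ Finset.univ.filter (· ≤ p), by
    intro x y hx hyx
    rw [Finset.mem_union] at hx ⊢
    by_cases hyp : y ≤ p
    · exact Or.inr (by simp [hyp])
    · rcases hx with hx | hx
      · rw [Finset.mem_map] at hx
        obtain ⟨a, ha, rfl⟩ := hx
        exact Or.inl (Finset.mem_map.2 ⟨⟨y, hyp⟩, J.2 ha hyx, rfl⟩)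
      · rw [Finset.mem_filter] at hx
        exact absurd (hyx.trans hx.2) hyp⟩, by
      simp⟩

lemma eRfun_coe (hmax : ∀ x : P, ¬ p < x) (J : Idl {q : P // ¬ q ≤ p}) :
    ((eRfun hmax J).1 : Finset P)
      = J.1.map (Function.Embedding.subtype _) ∪ Finset.univ.filter (· ≤ p) := rfl

lemma disj_map_le (J : Finset {q : P // ¬ q ≤ p}) :
    Disjoint (Finset.univ.filter (· ≤ p)) (J.map (Function.Embedding.subtype _)) := by
  rw [Finset.disjoint_left]
  intro a ha ha'
  rw [Finset.mem_filter] at ha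
  rw [Finset.mem_map] at ha'
  obtain ⟨b, -, rfl⟩ := ha'
  exact b.2 ha.2

lemma eR_bij (hmax : ∀ x : P, ¬ p < x) : Function.Bijective (eRfun (p := p) hmax) := by
  constructor
  · intro J J' h
    have h' := congrArg (fun I => ((I.1 : Finset P)).filter fun q => ¬ q ≤ p) h
    simp only [eRfun_coe, Finset.filter_union] at h'
    have e1 : ∀ (J : Finset {q : P // ¬ q ≤ p}),
        (J.map (Function.Embedding.subtype fun q => ¬ q ≤ p)).filter (fun q => ¬ q ≤ p)
          = J.map (Function.Embedding.subtype _) := by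
      intro J
      apply Finset.filter_true_of_mem
      intro x hx
      rw [Finset.mem_map] at hx
      obtain ⟨b, -, rfl⟩ := hx
      exact b.2
    have e2 : (Finset.univ.filter fun q : P => q ≤ p).filter (fun q => ¬ q ≤ p) = ∅ := by
      ext x; simp
    rw [e1, e1, e2, Finset.union_empty, Finset.union_empty] at h'
    exact Subtype.ext (Finset.map_injective _ h')
  · rintro ⟨I, hI⟩
    refine ⟨⟨I.1.subtype (fun q => ¬ q ≤ p), ?_⟩, ?_⟩
    · intro a b ha hba
      rw [Finset.mem_subtype] at ha ⊢
      exact I.2 ha hba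
    · apply Subtype.ext; apply Subtype.ext
      simp only [eRfun_coe, Finset.subtype_map]
      ext x
      simp only [Finset.mem_union, Finset.mem_filter, Finset.mem_univ, true_and]
      constructor
      · rintro (hx | hx)
        · exact hx.1
        · exact I.2 hI hx
      · intro hx
        by_cases hxp : x ≤ p
        · exact Or.inr hxp
        · exact Or.inl ⟨hx, hxp⟩

def eR (hmax : ∀ x : P, ¬ p < x) : Idl {q : P // ¬ q ≤ p} ≃ {I : Idl P // p ∈ I.1} :=
  Equiv.ofBijective _ (eR_bij hmax)

lemma eR_coe (hmax : ∀ x : P, ¬ p < x) (J : Idl {q : P // ¬ q ≤ p}) :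
    ((eR hmax J).1 : Finset P)
      = J.1.map (Function.Embedding.subtype _) ∪ Finset.univ.filter (· ≤ p) := rfl

end Step

section StepB
variable {P : Type u} [Fintype P] [PartialOrder P] {p : P} (K : Type*) [Field K]

/-- the Varchenko matrix restricted to ideals avoiding `p` -/
def Amat : Matrix {I : Idl P // p ∉ I.1} {I : Idl P // p ∉ I.1} (MvPolynomial P K) :=
  Matrix.of fun I I' => ∏ q ∈ symmDiff I.1.1 I'.1.1, (X q : MvPolynomial P K)

lemma det_step (hmax : ∀ x : P, ¬ p < x) :
    (Matrix.of fun I I' : Idl P =>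
        ∏ q ∈ symmDiff I.1 I'.1, (X q : MvPolynomial P K)).det =
      (Amat (p := p) K).det *
        ((1 - (X p : MvPolynomial P K) ^ 2) ^ Fintype.card {I : Idl P // p ∈ I.1} *
          ((Amat (p := p) K).submatrix (iot hmax) (iot hmax)).det) := by
  set A := Amat (p := p) K with hA
  set ι := iot (P := P) hmax with hι
  set Xp := (X p : MvPolynomial P K) with hXp
  set V := Matrix.of fun I I' : Idl P =>
      ∏ q ∈ symmDiff I.1 I'.1, (X q : MvPolynomial P K) with hV
  set e : {I : Idl P // p ∉ I.1} ⊕ {I : Idl P // p ∈ I.1} ≃ Idl P :=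
    (Equiv.sumComm _ _).trans (Equiv.sumCompl fun I : Idl P => p ∈ I.1) with he
  have he1 : ∀ l, e (Sum.inl l) = l.1 := fun l => rfl
  have he2 : ∀ r, e (Sum.inr r) = r.1 := fun r => rfl
  have hblock : V.submatrix e e =
      Matrix.fromBlocks A (Xp • A.submatrix id ι) (Xp • A.submatrix ι id)
        (A.submatrix ι ι) := by
    apply Matrix.ext
    rintro (l | r) (l' | r')
    · rfl
    · -- V l r' = Xp * A l (ι r')
      show V l.1 r'.1 = (Xp • A.submatrix id ι) l r'
      have h1 : symmDiff l.1.1 r'.1.1 = insert p (symmDiff l.1.1 (r'.1.1.erase p)) :=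
        symmDiff_insert_of_mem_right l.2 r'.2
      have h2 : p ∉ symmDiff l.1.1 (r'.1.1.erase p) := not_mem_symmDiff_erase_right l.2
      show (∏ q ∈ symmDiff l.1.1 r'.1.1, (X q : MvPolynomial P K)) = _
      rw [h1, Finset.prod_insert h2]
      rfl
    · show V r.1 l'.1 = (Xp • A.submatrix ι id) r l'
      have h1 : symmDiff r.1.1 l'.1.1 = insert p (symmDiff (r.1.1.erase p) l'.1.1) := by
        rw [symmDiff_comm, symmDiff_insert_of_mem_right l'.2 r.2, symmDiff_comm]
      have h2 : p ∉ symmDiff (r.1.1.erase p) l'.1.1 := by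
        rw [symmDiff_comm]; exact not_mem_symmDiff_erase_right l'.2
      show (∏ q ∈ symmDiff r.1.1 l'.1.1, (X q : MvPolynomial P K)) = _
      rw [h1, Finset.prod_insert h2]
      rfl
    · show V r.1 r'.1 = (A.submatrix ι ι) r r'
      show (∏ q ∈ symmDiff r.1.1 r'.1.1, (X q : MvPolynomial P K)) = _
      have h1 : symmDiff (r.1.1.erase p) (r'.1.1.erase p) = symmDiff r.1.1 r'.1.1 :=
        symmDiff_erase_erase r.2 r'.2
      show _ = ∏ q ∈ symmDiff ((ι r).1.1) ((ι r').1.1), (X q : MvPolynomial P K)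
      rw [hι]
      show _ = ∏ q ∈ symmDiff (r.1.1.erase p) (r'.1.1.erase p), (X q : MvPolynomial P K)
      rw [h1]
  set Pm : Matrix {I : Idl P // p ∉ I.1} {I : Idl P // p ∈ I.1} (MvPolynomial P K) :=
    (1 : Matrix _ _ _).submatrix (⇑(Equiv.refl {I : Idl P // p ∉ I.1})) ι with hPm
  have hmulPm : ∀ (m : Type u) (M : Matrix m {I : Idl P // p ∉ I.1}
      (MvPolynomial P K)), M * Pm = M.submatrix id ι := by
    intro m M
    rw [hPm, Matrix.mul_submatrix_one]
    simp
  have key : (V.submatrix e e) *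
      Matrix.fromBlocks 1 (-(Xp • Pm)) 0 1 =
      Matrix.fromBlocks A 0 (Xp • A.submatrix ι id)
        ((1 - Xp ^ 2) • A.submatrix ι ι) := by
    rw [hblock, Matrix.fromBlocks_multiply]
    have hTL : A * (1 : Matrix {I : Idl P // p ∉ I.1} {I : Idl P // p ∉ I.1} (MvPolynomial P K))
        + (Xp • A.submatrix id ι) * (0 : Matrix {I : Idl P // p ∈ I.1} {I : Idl P // p ∉ I.1} (MvPolynomial P K))
        = A := by
      rw [Matrix.mul_one, Matrix.mul_zero, add_zero]
    have hTR : A * -(Xp • Pm) + (Xp • A.submatrix id ι)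
        * (1 : Matrix {I : Idl P // p ∈ I.1} {I : Idl P // p ∈ I.1} (MvPolynomial P K)) = 0 := by
      rw [Matrix.mul_one, Matrix.mul_neg, Matrix.mul_smul, hmulPm _]
      exact neg_add_cancel _
    have hBL : (Xp • A.submatrix ι id)
        * (1 : Matrix {I : Idl P // p ∉ I.1} {I : Idl P // p ∉ I.1} (MvPolynomial P K))
        + (A.submatrix ι ι) * (0 : Matrix {I : Idl P // p ∈ I.1} {I : Idl P // p ∉ I.1} (MvPolynomial P K))
        = Xp • A.submatrix ι id := by
      rw [Matrix.mul_one, Matrix.mul_zero, add_zero]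
    have hBR : (Xp • A.submatrix ι id) * -(Xp • Pm) + (A.submatrix ι ι)
        * (1 : Matrix {I : Idl P // p ∈ I.1} {I : Idl P // p ∈ I.1} (MvPolynomial P K))
        = (1 - Xp ^ 2) • A.submatrix ι ι := by
      rw [Matrix.mul_one, Matrix.mul_neg, Matrix.smul_mul, Matrix.mul_smul, hmulPm _]
      apply Matrix.ext
      intro i j
      simp only [Matrix.neg_apply, Matrix.smul_apply, Matrix.add_apply,
        Matrix.submatrix_submatrix, Matrix.submatrix_apply, smul_eq_mul, id_eq,
        Function.comp_apply, Function.comp_id, Function.id_comp]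
      ring
    rw [hTL, hTR, hBL, hBR]
  have hdetE : (Matrix.fromBlocks (1 : Matrix {I : Idl P // p ∉ I.1} _ (MvPolynomial P K))
      (-(Xp • Pm)) 0 1).det = 1 := by
    rw [Matrix.det_fromBlocks_zero₂₁, Matrix.det_one, Matrix.det_one, mul_one]
  have hdetV : V.det = (V.submatrix e e).det := (Matrix.det_submatrix_equiv_self e V).symm
  have := congrArg Matrix.det key
  rw [Matrix.det_mul, hdetE, mul_one] at this
  rw [hdetV, this, Matrix.det_fromBlocks_zero₁₂, Matrix.det_smul]

lemma Amat_submatrix_eL (hmax : ∀ x : P, ¬ p < x) :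
    (Amat (p := p) K).submatrix (eL hmax) (eL hmax)
      = (Matrix.of fun J J' : Idl {q : P // q ≠ p} =>
          ∏ q ∈ symmDiff J.1 J'.1, (X q : MvPolynomial {q : P // q ≠ p} K)).map
          ⇑(rename (Subtype.val : {q : P // q ≠ p} → P)) := by
  apply Matrix.ext
  intro J J'
  show (∏ q ∈ symmDiff ((eL hmax J).1 : Finset P) ((eL hmax J').1 : Finset P),
      (X q : MvPolynomial P K)) = _
  rw [eL_coe, eL_coe, map_symmDiff, Finset.prod_map]
  show _ = rename Subtype.val (∏ q ∈ symmDiff J.1 J'.1, (X q : MvPolynomial _ K))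
  rw [map_prod]
  refine Finset.prod_congr rfl fun a _ => ?_
  rw [rename_X, Function.Embedding.coe_subtype]

lemma Dmat_submatrix_eR (hmax : ∀ x : P, ¬ p < x) :
    ((Amat (p := p) K).submatrix (iot hmax) (iot hmax)).submatrix (eR hmax) (eR hmax)
      = (Matrix.of fun J J' : Idl {q : P // ¬ q ≤ p} =>
          ∏ q ∈ symmDiff J.1 J'.1, (X q : MvPolynomial {q : P // ¬ q ≤ p} K)).map
          ⇑(rename (Subtype.val : {q : P // ¬ q ≤ p} → P)) := by
  apply Matrix.ext
  intro J J'
  show (∏ q ∈ symmDiff ((iot hmax (eR hmax J)).1 : Finset P)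
      ((iot hmax (eR hmax J')).1 : Finset P), (X q : MvPolynomial P K)) = _
  rw [iot_coe, iot_coe, symmDiff_erase_erase (eR hmax J).2 (eR hmax J').2,
    eR_coe, eR_coe, symmDiff_union_left (disj_map_le _) (disj_map_le _),
    map_symmDiff, Finset.prod_map]
  show _ = rename Subtype.val (∏ q ∈ symmDiff J.1 J'.1, (X q : MvPolynomial _ K))
  rw [map_prod]
  refine Finset.prod_congr rfl fun a _ => ?_
  rw [rename_X, Function.Embedding.coe_subtype]

lemma Nmax_eq_nat_card (P : Type u) [Fintype P] [PartialOrder P] (p : P) :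
    Nmax P p = Nat.card {I : Idl P // p ∈ I.1 ∧ ∀ r ∈ I.1, ¬ p < r} := by
  rw [Nat.card_eq_fintype_card, Fintype.card_subtype, Nmax]

lemma card_right (hmax : ∀ x : P, ¬ p < x) :
    Fintype.card {I : Idl P // p ∈ I.1} = Nmax P p := by
  rw [Nmax_eq_nat_card, ← Nat.card_eq_fintype_card]
  exact Nat.card_congr (Equiv.subtypeEquivRight fun I =>
    ⟨fun h => ⟨h, fun r _ => hmax r⟩, fun h => h.1⟩)

lemma card_split (q : P) :
    Nat.card {I : Idl P // q ∈ I.1 ∧ ∀ r ∈ I.1, ¬ q < r}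
      = Nat.card {I : Idl P // (q ∈ I.1 ∧ ∀ r ∈ I.1, ¬ q < r) ∧ p ∉ I.1}
        + Nat.card {I : Idl P // (q ∈ I.1 ∧ ∀ r ∈ I.1, ¬ q < r) ∧ p ∈ I.1} := by
  rw [← Nat.card_sum]
  apply Nat.card_congr
  refine (Equiv.sumCompl fun x : {I : Idl P // q ∈ I.1 ∧ ∀ r ∈ I.1, ¬ q < r} =>
    p ∉ x.1.1).symm.trans ?_
  refine Equiv.sumCongr
    (Equiv.subtypeSubtypeEquivSubtypeInter
      (fun I : Idl P => q ∈ I.1 ∧ ∀ r ∈ I.1, ¬ q < r) (fun I : Idl P => p ∉ I.1)) ?_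
  refine (Equiv.subtypeSubtypeEquivSubtypeInter
    (fun I : Idl P => q ∈ I.1 ∧ ∀ r ∈ I.1, ¬ q < r) (fun I : Idl P => ¬ p ∉ I.1)).trans
    (Equiv.subtypeEquivRight fun I => ?_)
  constructor
  · exact fun h => ⟨h.1, not_not.1 h.2⟩
  · exact fun h => ⟨h.1, not_not.2 h.2⟩

lemma eL_cond (hmax : ∀ x : P, ¬ p < x) (q : P) (hq : q ≠ p)
    (J : Idl {r : P // r ≠ p}) :
    ((⟨q, hq⟩ : {r : P // r ≠ p}) ∈ J.1 ∧ ∀ r ∈ J.1, ¬ (⟨q, hq⟩ : {r : P // r ≠ p}) < r)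
      ↔ (q ∈ ((eL hmax J).1 : Finset P) ∧ ∀ r ∈ ((eL hmax J).1 : Finset P), ¬ q < r) := by
  rw [eL_coe]
  constructor
  · rintro ⟨h1, h2⟩
    refine ⟨Finset.mem_map.2 ⟨⟨q, hq⟩, h1, rfl⟩, ?_⟩
    intro r hr hlt
    obtain ⟨a, ha, rfl⟩ := Finset.mem_map.1 hr
    exact h2 a ha (Subtype.mk_lt_mk.2 hlt)
  · rintro ⟨h1, h2⟩
    obtain ⟨a, ha, hav⟩ := Finset.mem_map.1 h1
    have haq : a = ⟨q, hq⟩ := Subtype.ext hav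
    refine ⟨haq ▸ ha, ?_⟩
    intro r hr hlt
    exact h2 r.1 (Finset.mem_map.2 ⟨r, hr, rfl⟩) (Subtype.mk_lt_mk.1 hlt)

lemma cardL (hmax : ∀ x : P, ¬ p < x) (q : P) (hq : q ≠ p) :
    Nat.card {I : Idl P // (q ∈ I.1 ∧ ∀ r ∈ I.1, ¬ q < r) ∧ p ∉ I.1}
      = Nmax {r : P // r ≠ p} ⟨q, hq⟩ := by
  have e1 : {J : Idl {r : P // r ≠ p} //
      (⟨q, hq⟩ : {r : P // r ≠ p}) ∈ J.1
        ∧ ∀ r ∈ J.1, ¬ (⟨q, hq⟩ : {r : P // r ≠ p}) < r}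
      ≃ {l : {I : Idl P // p ∉ I.1} //
        q ∈ (l.1.1 : Finset P) ∧ ∀ r ∈ (l.1.1 : Finset P), ¬ q < r} :=
    (eL hmax).subtypeEquiv fun J => eL_cond hmax q hq J
  have e2 : {l : {I : Idl P // p ∉ I.1} //
        q ∈ (l.1.1 : Finset P) ∧ ∀ r ∈ (l.1.1 : Finset P), ¬ q < r}
      ≃ {I : Idl P // p ∉ I.1 ∧ (q ∈ I.1 ∧ ∀ r ∈ I.1, ¬ q < r)} :=
    Equiv.subtypeSubtypeEquivSubtypeInter (fun I : Idl P => p ∉ I.1)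
      (fun I : Idl P => q ∈ I.1 ∧ ∀ r ∈ I.1, ¬ q < r)
  have e3 : {I : Idl P // p ∉ I.1 ∧ (q ∈ I.1 ∧ ∀ r ∈ I.1, ¬ q < r)}
      ≃ {I : Idl P // (q ∈ I.1 ∧ ∀ r ∈ I.1, ¬ q < r) ∧ p ∉ I.1} :=
    Equiv.subtypeEquivRight fun I => and_comm
  rw [Nmax_eq_nat_card]
  exact Nat.card_congr (e1.trans (e2.trans e3)).symm

lemma eR_cond (hmax : ∀ x : P, ¬ p < x) (q : P) (hqp : ¬ q ≤ p)
    (J : Idl {r : P // ¬ r ≤ p}) :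
    ((⟨q, hqp⟩ : {r : P // ¬ r ≤ p}) ∈ J.1
        ∧ ∀ r ∈ J.1, ¬ (⟨q, hqp⟩ : {r : P // ¬ r ≤ p}) < r)
      ↔ (q ∈ ((eR hmax J).1 : Finset P) ∧ ∀ r ∈ ((eR hmax J).1 : Finset P), ¬ q < r) := by
  rw [eR_coe]
  constructor
  · rintro ⟨h1, h2⟩
    refine ⟨Finset.mem_union.2 (Or.inl (Finset.mem_map.2 ⟨⟨q, hqp⟩, h1, rfl⟩)), ?_⟩
    intro r hr hlt
    rcases Finset.mem_union.1 hr with hr | hr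
    · obtain ⟨a, ha, rfl⟩ := Finset.mem_map.1 hr
      exact h2 a ha (Subtype.mk_lt_mk.2 hlt)
    · exact hqp (hlt.le.trans (Finset.mem_filter.1 hr).2)
  · rintro ⟨h1, h2⟩
    rcases Finset.mem_union.1 h1 with h1 | h1
    · obtain ⟨a, ha, hav⟩ := Finset.mem_map.1 h1
      have haq : a = ⟨q, hqp⟩ := Subtype.ext hav
      refine ⟨haq ▸ ha, ?_⟩
      intro r hr hlt
      exact h2 r.1 (Finset.mem_union.2 (Or.inl (Finset.mem_map.2 ⟨r, hr, rfl⟩)))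
        (Subtype.mk_lt_mk.1 hlt)
    · exact absurd (Finset.mem_filter.1 h1).2 hqp

lemma cardR (hmax : ∀ x : P, ¬ p < x) (q : P) (hqp : ¬ q ≤ p) :
    Nat.card {I : Idl P // (q ∈ I.1 ∧ ∀ r ∈ I.1, ¬ q < r) ∧ p ∈ I.1}
      = Nmax {r : P // ¬ r ≤ p} ⟨q, hqp⟩ := by
  have e1 : {J : Idl {r : P // ¬ r ≤ p} //
      (⟨q, hqp⟩ : {r : P // ¬ r ≤ p}) ∈ J.1
        ∧ ∀ r ∈ J.1, ¬ (⟨q, hqp⟩ : {r : P // ¬ r ≤ p}) < r}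
      ≃ {l : {I : Idl P // p ∈ I.1} //
        q ∈ (l.1.1 : Finset P) ∧ ∀ r ∈ (l.1.1 : Finset P), ¬ q < r} :=
    (eR hmax).subtypeEquiv fun J => eR_cond hmax q hqp J
  have e2 : {l : {I : Idl P // p ∈ I.1} //
        q ∈ (l.1.1 : Finset P) ∧ ∀ r ∈ (l.1.1 : Finset P), ¬ q < r}
      ≃ {I : Idl P // p ∈ I.1 ∧ (q ∈ I.1 ∧ ∀ r ∈ I.1, ¬ q < r)} :=
    Equiv.subtypeSubtypeEquivSubtypeInter (fun I : Idl P => p ∈ I.1)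
      (fun I : Idl P => q ∈ I.1 ∧ ∀ r ∈ I.1, ¬ q < r)
  have e3 : {I : Idl P // p ∈ I.1 ∧ (q ∈ I.1 ∧ ∀ r ∈ I.1, ¬ q < r)}
      ≃ {I : Idl P // (q ∈ I.1 ∧ ∀ r ∈ I.1, ¬ q < r) ∧ p ∈ I.1} :=
    Equiv.subtypeEquivRight fun I => and_comm
  rw [Nmax_eq_nat_card]
  exact Nat.card_congr (e1.trans (e2.trans e3)).symm

lemma cardR_zero (q : P) (hq : q ≠ p) (hqp : q ≤ p) :
    Nat.card {I : Idl P // (q ∈ I.1 ∧ ∀ r ∈ I.1, ¬ q < r) ∧ p ∈ I.1} = 0 := by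
  have : IsEmpty {I : Idl P // (q ∈ I.1 ∧ ∀ r ∈ I.1, ¬ q < r) ∧ p ∈ I.1} := by
    refine ⟨fun x => ?_⟩
    obtain ⟨I, ⟨hqI, hmaxI⟩, hpI⟩ := x
    exact hmaxI p hpI (lt_of_le_of_ne hqp hq)
  exact Nat.card_of_isEmpty

lemma Nmax_split (hmax : ∀ x : P, ¬ p < x) (q : P) (hq : q ≠ p) :
    Nmax P q = (if h : q ≠ p then Nmax {r : P // r ≠ p} ⟨q, h⟩ else 0)
      + (if h : ¬ q ≤ p then Nmax {r : P // ¬ r ≤ p} ⟨q, h⟩ else 0) := by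
  rw [dif_pos hq, Nmax_eq_nat_card, card_split q, cardL hmax q hq]
  by_cases hqp : q ≤ p
  · rw [dif_neg (by simpa using hqp), cardR_zero q hq hqp, add_zero]
  · rw [dif_pos hqp, cardR hmax q hqp]

end StepB



lemma detVar_irrel (P' : Type u) [PartialOrder P'] (K : Type*) [Field K]
    (E1 E2 : DecidableEq P') (D1 D2 : DecidableEq (Idl P')) (F1 F2 : Fintype (Idl P')) :
    @Matrix.det (Idl P') D1 F1 (MvPolynomial P' K) _ (Matrix.of fun I I' : Idl P' =>
        ∏ q ∈ @symmDiff (Finset P')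
            (@SemilatticeSup.toMax _ (@Lattice.toSemilatticeSup _ (@Finset.instLattice _ E1)))
            (@Finset.instSDiff _ E1) I.1 I'.1, (X q : MvPolynomial P' K))
      = @Matrix.det (Idl P') D2 F2 (MvPolynomial P' K) _ (Matrix.of fun I I' : Idl P' =>
        ∏ q ∈ @symmDiff (Finset P')
            (@SemilatticeSup.toMax _ (@Lattice.toSemilatticeSup _ (@Finset.instLattice _ E2)))
            (@Finset.instSDiff _ E2) I.1 I'.1, (X q : MvPolynomial P' K)) := by
  obtain rfl : E1 = E2 := Subsingleton.elim _ _
  obtain rfl : D1 = D2 := Subsingleton.elim _ _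
  obtain rfl : F1 = F2 := Subsingleton.elim _ _
  rfl

lemma main_empty (K : Type*) [Field K] (P : Type u) [Fintype P] [PartialOrder P]
    (h : IsEmpty P) :
    (Matrix.of fun I I' : Idl P =>
        ∏ q ∈ symmDiff I.1 I'.1, (X q : MvPolynomial P K)).det
      = ∏ q : P, (1 - (X q : MvPolynomial P K) ^ 2) ^ Nmax P q := by
  haveI := h
  haveI : Unique (Idl P) :=
    { default := ⟨∅, by intro a b ha _; exact absurd ha (Finset.notMem_empty a)⟩
      uniq := fun I => Subtype.ext (by ext a; exact isEmptyElim a) }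
  rw [Matrix.det_unique]
  have h1 : (Finset.univ : Finset P) = ∅ := Finset.univ_eq_empty
  rw [h1, Finset.prod_empty]
  show (∏ q ∈ symmDiff ((default : Idl P).1) ((default : Idl P).1),
    (X q : MvPolynomial P K)) = 1
  rw [symmDiff_self]
  show (∏ q ∈ (⊥ : Finset P), (X q : MvPolynomial P K)) = 1
  rw [Finset.bot_eq_empty, Finset.prod_empty]

lemma rename_formula {σ : Type u} {P : Type u} [Fintype σ] (K : Type*) [Field K]
    (f : σ → P) (n : σ → ℕ) :
    rename f (∏ q : σ, (1 - (X q : MvPolynomial σ K) ^ 2) ^ n q)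
      = ∏ q : σ, (1 - (X (f q) : MvPolynomial P K) ^ 2) ^ n q := by
  rw [map_prod]
  refine Finset.prod_congr rfl fun a _ => ?_
  rw [map_pow, map_sub, map_one, map_pow, rename_X]

theorem main (K : Type*) [Field K] :
    ∀ (n : ℕ) (P : Type u) [Fintype P] [PartialOrder P], Fintype.card P ≤ n →
      (Matrix.of fun I I' : Idl P =>
          ∏ q ∈ symmDiff I.1 I'.1, (X q : MvPolynomial P K)).det
        = ∏ q : P, (1 - (X q : MvPolynomial P K) ^ 2) ^ Nmax P q := by
  intro n
  induction n with
  | zero =>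
    intro P _ _ hc
    exact main_empty K P (Fintype.card_eq_zero_iff.1 (Nat.le_zero.1 hc))
  | succ n ih =>
    intro P instF instO hc
    rcases isEmpty_or_nonempty P with hP | hP
    · exact main_empty K P hP
    obtain ⟨p, -, hmax'⟩ := Finset.exists_maximal (Finset.univ_nonempty (α := P))
    have hmax : ∀ x : P, ¬ p < x := fun x hx => not_lt_of_ge (hmax' (Finset.mem_univ x) hx.le) hx
    have hcard1 : Fintype.card {q : P // q ≠ p} ≤ n := by
      have h1 : Fintype.card {q : P // q ≠ p} < Fintype.card P :=
        Fintype.card_subtype_lt (x := p) (by simp)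
      omega
    have hcard2 : Fintype.card {q : P // ¬ q ≤ p} ≤ n := by
      have h1 : Fintype.card {q : P // ¬ q ≤ p} < Fintype.card P :=
        Fintype.card_subtype_lt (x := p) (by simp)
      omega
    rw [det_step K hmax]
    have hA : (Amat (p := p) K).det
        = ∏ q : {r : P // r ≠ p},
            (1 - (X q.1 : MvPolynomial P K) ^ 2) ^ Nmax {r : P // r ≠ p} q := by
      rw [← Matrix.det_submatrix_equiv_self (eL hmax), Amat_submatrix_eL K hmax]
      have hdet : ((Matrix.of fun J J' : Idl {r : P // r ≠ p} =>
          ∏ q ∈ symmDiff J.1 J'.1, (X q : MvPolynomial {r : P // r ≠ p} K)).map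
            ⇑(rename (Subtype.val : {r : P // r ≠ p} → P))).det
          = rename (Subtype.val : {r : P // r ≠ p} → P)
            (Matrix.of fun J J' : Idl {r : P // r ≠ p} =>
              ∏ q ∈ symmDiff J.1 J'.1, (X q : MvPolynomial {r : P // r ≠ p} K)).det :=
        by
          have h := AlgHom.map_det (rename (Subtype.val : {r : P // r ≠ p} → P))
            (Matrix.of fun J J' : Idl {r : P // r ≠ p} =>
              ∏ q ∈ symmDiff J.1 J'.1, (X q : MvPolynomial {r : P // r ≠ p} K))
          rw [AlgHom.mapMatrix_apply] at h
          exact h.symm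
      rw [hdet]
      refine Eq.trans ?_ (rename_formula K Subtype.val (Nmax {r : P // r ≠ p}))
      exact congrArg (rename (Subtype.val : {r : P // r ≠ p} → P))
        ((detVar_irrel {q : P // q ≠ p} K _ _ _ _ _ _).trans (ih {q : P // q ≠ p} hcard1))
    have hD : ((Amat (p := p) K).submatrix (iot hmax) (iot hmax)).det
        = ∏ q : {r : P // ¬ r ≤ p},
            (1 - (X q.1 : MvPolynomial P K) ^ 2) ^ Nmax {r : P // ¬ r ≤ p} q := by
      rw [← Matrix.det_submatrix_equiv_self (eR hmax), Dmat_submatrix_eR K hmax]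
      have hdet : ((Matrix.of fun J J' : Idl {r : P // ¬ r ≤ p} =>
          ∏ q ∈ symmDiff J.1 J'.1, (X q : MvPolynomial {r : P // ¬ r ≤ p} K)).map
            ⇑(rename (Subtype.val : {r : P // ¬ r ≤ p} → P))).det
          = rename (Subtype.val : {r : P // ¬ r ≤ p} → P)
            (Matrix.of fun J J' : Idl {r : P // ¬ r ≤ p} =>
              ∏ q ∈ symmDiff J.1 J'.1, (X q : MvPolynomial {r : P // ¬ r ≤ p} K)).det :=
        by
          have h := AlgHom.map_det (rename (Subtype.val : {r : P // ¬ r ≤ p} → P))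
            (Matrix.of fun J J' : Idl {r : P // ¬ r ≤ p} =>
              ∏ q ∈ symmDiff J.1 J'.1, (X q : MvPolynomial {r : P // ¬ r ≤ p} K))
          rw [AlgHom.mapMatrix_apply] at h
          exact h.symm
      rw [hdet]
      refine Eq.trans ?_ (rename_formula K Subtype.val (Nmax {r : P // ¬ r ≤ p}))
      exact congrArg (rename (Subtype.val : {r : P // ¬ r ≤ p} → P))
        ((detVar_irrel {q : P // ¬ q ≤ p} K _ _ _ _ _ _).trans (ih {q : P // ¬ q ≤ p} hcard2))
    rw [hA, hD, card_right hmax]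
    -- assembly of the product
    have hP' : (∏ q : {r : P // r ≠ p},
          (1 - (X q.1 : MvPolynomial P K) ^ 2) ^ Nmax {r : P // r ≠ p} q)
        = ∏ q ∈ Finset.univ.erase p, (1 - (X q : MvPolynomial P K) ^ 2) ^
            (if h : q ≠ p then Nmax {r : P // r ≠ p} ⟨q, h⟩ else 0) := by
      rw [Finset.prod_subtype (p := fun q : P => q ≠ p) (Finset.univ.erase p)
        (fun x => by simp) (fun q : P => (1 - (X q : MvPolynomial P K) ^ 2) ^
          (if h : q ≠ p then Nmax {r : P // r ≠ p} ⟨q, h⟩ else 0))]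
      refine Finset.prod_congr rfl fun q _ => ?_
      rw [dif_pos q.2, Subtype.coe_eta]
    have hQ' : (∏ q : {r : P // ¬ r ≤ p},
          (1 - (X q.1 : MvPolynomial P K) ^ 2) ^ Nmax {r : P // ¬ r ≤ p} q)
        = ∏ q ∈ Finset.univ.erase p, (1 - (X q : MvPolynomial P K) ^ 2) ^
            (if h : ¬ q ≤ p then Nmax {r : P // ¬ r ≤ p} ⟨q, h⟩ else 0) := by
      have hsub : (Finset.univ.filter fun q : P => ¬ q ≤ p) ⊆ Finset.univ.erase p := by
        intro x hx
        rw [Finset.mem_filter] at hx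
        rw [Finset.mem_erase]
        refine ⟨?_, Finset.mem_univ x⟩
        rintro rfl
        exact hx.2 le_rfl
      have hout : ∀ x ∈ Finset.univ.erase p,
          x ∉ (Finset.univ.filter fun q : P => ¬ q ≤ p) →
          (1 - (X x : MvPolynomial P K) ^ 2) ^
            (if h : ¬ x ≤ p then Nmax {r : P // ¬ r ≤ p} ⟨x, h⟩ else 0) = 1 := by
        intro x hx hx'
        have hxp : x ≤ p := by
          by_contra hc'
          exact hx' (Finset.mem_filter.2 ⟨Finset.mem_univ x, hc'⟩)
        rw [dif_neg (by simpa using hxp), pow_zero]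
      rw [show (∏ q ∈ Finset.univ.erase p, (1 - (X q : MvPolynomial P K) ^ 2) ^
            (if h : ¬ q ≤ p then Nmax {r : P // ¬ r ≤ p} ⟨q, h⟩ else 0))
          = ∏ q ∈ (Finset.univ.filter fun q : P => ¬ q ≤ p),
            (1 - (X q : MvPolynomial P K) ^ 2) ^
            (if h : ¬ q ≤ p then Nmax {r : P // ¬ r ≤ p} ⟨q, h⟩ else 0) from
        (Finset.prod_subset hsub hout).symm]
      rw [Finset.prod_subtype (p := fun q : P => ¬ q ≤ p)
        (Finset.univ.filter fun q : P => ¬ q ≤ p)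
        (fun x => by simp) (fun q : P => (1 - (X q : MvPolynomial P K) ^ 2) ^
          (if h : ¬ q ≤ p then Nmax {r : P // ¬ r ≤ p} ⟨q, h⟩ else 0))]
      refine Finset.prod_congr rfl fun q _ => ?_
      rw [dif_pos q.2, Subtype.coe_eta]
    rw [hP', hQ']
    rw [← Finset.prod_erase_mul Finset.univ
      (fun q : P => (1 - (X q : MvPolynomial P K) ^ 2) ^ Nmax P q) (Finset.mem_univ p)]
    have hsplit : ∀ q ∈ Finset.univ.erase p,
        (1 - (X q : MvPolynomial P K) ^ 2) ^ Nmax P q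
          = (1 - (X q : MvPolynomial P K) ^ 2) ^
              (if h : q ≠ p then Nmax {r : P // r ≠ p} ⟨q, h⟩ else 0)
            * (1 - (X q : MvPolynomial P K) ^ 2) ^
              (if h : ¬ q ≤ p then Nmax {r : P // ¬ r ≤ p} ⟨q, h⟩ else 0) := by
      intro q hq
      rw [← pow_add, ← Nmax_split hmax q (Finset.mem_erase.1 hq).1]
    rw [Finset.prod_congr rfl hsplit, Finset.prod_mul_distrib]
    ring

end VarAux


/-- the Varchenko determinant of the distributive lattice of order
ideals of a finite poset `P`: the matrix indexed by order ideals whose `(I,I')`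
entry is `∏_{p ∈ I Δ I'} x_p` has determinant `∏_{p ∈ P} (1 - x_p²)^{m_p}`,
where `m_p` is the number of antichains of `P` containing `p`. -/
theorem varchenko_det_ideals {P : Type*} [Fintype P] [PartialOrder P]
    (K : Type*) [Field K] :
    (Matrix.of fun I I' : {I : Finset P // ∀ ⦃p q : P⦄, p ∈ I → q ≤ p → q ∈ I} =>
        ∏ p ∈ symmDiff I.1 I'.1, (X p : MvPolynomial P K)).det =
      ∏ p : P, (1 - (X p : MvPolynomial P K) ^ 2) ^
        (Finset.univ.filter fun A : Finset P =>
          IsAntichain (· ≤ ·) (A : Set P) ∧ p ∈ A).card := by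
  refine (VarAux.main K (Fintype.card P) P le_rfl).trans ?_
  exact Finset.prod_congr rfl fun pp _ => by rw [VarAux.antichain_card_eq_Nmax]

end
end
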